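/- Let D be a closed disk of radius R centered at O, P a point on its boundary, and n ≥ 4 even. With Ã₁, …, Ãₙ the second intersections of the n equiangular lines through P with the circle (clockwise from P), the sum of the area of the slice bounded by PÃ_{n/2}, PÃ_{n/2+1} and the arc Ã_{n/2}Ã_{n/2+1}, together with the area of the region bounded by segments PÃ₁, PÃₙ and the arc Ã₁PÃₙ containing P, equals (2/n)·πR². -/

import Mathlib

open Real MeasureTheory

/-- The closed angular sector at `P` of directions with angles in `[a, b]`. -/
def angularSector (P : ℂ) (a b : ℝ) : Set ℂ :=
  {z : ℂ | ∃ t : ℝ, 0 ≤ t ∧ ∃ φ : ℝ, a ≤ φ ∧ φ ≤ b ∧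
    z = P + (t : ℂ) * Complex.exp ((φ : ℝ) * Complex.I)}

open Set

lemma sector_measurable (P : ℂ) (a b : ℝ) : MeasurableSet (angularSector P a b) := by
  have h : angularSector P a b = ⋃ n : ℕ,
      (fun q : ℝ × ℝ => P + (q.1 : ℂ) * Complex.exp ((q.2 : ℝ) * Complex.I)) ''
        (Set.Icc 0 (n : ℝ) ×ˢ Set.Icc a b) := by
    ext z
    simp only [angularSector, Set.mem_setOf_eq, Set.mem_iUnion, Set.mem_image, Set.mem_prod,
      Set.mem_Icc]
    constructor
    · rintro ⟨t, ht, φ, hφ1, hφ2, rfl⟩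
      exact ⟨⌈t⌉₊, (t, φ), ⟨⟨ht, Nat.le_ceil t⟩, hφ1, hφ2⟩, rfl⟩
    · rintro ⟨n, ⟨t, φ⟩, ⟨⟨ht0, _⟩, hφ1, hφ2⟩, rfl⟩
      exact ⟨t, ht0, φ, hφ1, hφ2, rfl⟩
  rw [h]
  refine MeasurableSet.iUnion fun n => ?_
  refine ((isCompact_Icc.prod isCompact_Icc).image ?_).measurableSet
  fun_prop

lemma mem_ball_iff {R r φ : ℝ} (hR : 0 < R) (hr : 0 < r) :
    ((r : ℂ) * Complex.exp ((φ : ℝ) * Complex.I) ∈ Metric.closedBall (R : ℂ) R) ↔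
      r ≤ 2 * R * Real.cos φ := by
  rw [Metric.mem_closedBall, Complex.dist_eq]
  have hre : ((r : ℂ) * Complex.exp ((φ : ℝ) * Complex.I) - (R : ℂ)).re
      = r * Real.cos φ - R := by
    simp [Complex.mul_re, Complex.exp_ofReal_mul_I_re, Complex.exp_ofReal_mul_I_im]
  have him : ((r : ℂ) * Complex.exp ((φ : ℝ) * Complex.I) - (R : ℂ)).im
      = r * Real.sin φ := by
    simp [Complex.mul_im, Complex.exp_ofReal_mul_I_re, Complex.exp_ofReal_mul_I_im]
  have hsq : ‖((r : ℂ) * Complex.exp ((φ : ℝ) * Complex.I) - (R : ℂ))‖ ^ 2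
      = (r * Real.cos φ - R) ^ 2 + (r * Real.sin φ) ^ 2 := by
    rw [Complex.sq_norm, Complex.normSq_apply, hre, him]; ring
  have pyth : (r * Real.sin φ) ^ 2 + (r * Real.cos φ) ^ 2 = r ^ 2 := by
    have h := Real.sin_sq_add_cos_sq φ
    calc (r * Real.sin φ) ^ 2 + (r * Real.cos φ) ^ 2
        = r ^ 2 * (Real.sin φ ^ 2 + Real.cos φ ^ 2) := by ring
      _ = r ^ 2 := by rw [h, mul_one]
  constructor
  · intro hle
    have h2 : (r * Real.cos φ - R) ^ 2 + (r * Real.sin φ) ^ 2 ≤ R ^ 2 := by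
      rw [← hsq]
      have habs := norm_nonneg ((r : ℂ) * Complex.exp ((φ : ℝ) * Complex.I) - (R : ℂ))
      nlinarith
    have key : r * r ≤ (2 * R * Real.cos φ) * r := by nlinarith
    exact le_of_mul_le_mul_right key hr
  · intro hle
    have key : r * r ≤ (2 * R * Real.cos φ) * r := mul_le_mul_of_nonneg_right hle hr.le
    have h2 : ‖((r : ℂ) * Complex.exp ((φ : ℝ) * Complex.I) - (R : ℂ))‖ ^ 2
        ≤ R ^ 2 := by
      rw [hsq]; nlinarith
    have habs := norm_nonneg ((r : ℂ) * Complex.exp ((φ : ℝ) * Complex.I) - (R : ℂ))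
    nlinarith

lemma mem_sector_iff {a b r φ : ℝ} (hr : 0 < r) (ha : -π < a) (hb : b ≤ π)
    (hφ1 : -π < φ) (hφ2 : φ ≤ π) :
    ((r : ℂ) * Complex.exp ((φ : ℝ) * Complex.I) ∈ angularSector 0 a b) ↔ a ≤ φ ∧ φ ≤ b := by
  constructor
  · rintro ⟨t, ht, φ', h1, h2, hz⟩
    rw [zero_add] at hz
    have hrt : r = t := by
      have h := congrArg (fun w : ℂ => ‖w‖) hz
      simpa [Complex.norm_exp_ofReal_mul_I, abs_of_nonneg hr.le, abs_of_nonneg ht] using h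
    subst hrt
    have hexp : Complex.exp ((φ : ℝ) * Complex.I) = Complex.exp ((φ' : ℝ) * Complex.I) :=
      mul_left_cancel₀ (by exact_mod_cast hr.ne') hz
    obtain ⟨k, hk⟩ := Complex.exp_eq_exp_iff_exists_int.mp hexp
    have him : φ = φ' + k * (2 * π) := by
      have h := congrArg Complex.im hk
      simpa using h
    have hk0 : k = 0 := by
      have h1' : (k : ℝ) < 1 := by nlinarith [pi_pos]
      have h2' : (-1 : ℝ) < (k : ℝ) := by nlinarith [pi_pos]
      have hk1 : k < 1 := by exact_mod_cast h1'
      have hk2 : (-1 : ℤ) < k := by exact_mod_cast h2'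
      omega
    rw [hk0] at him
    simp at him
    subst him
    exact ⟨h1, h2⟩
  · rintro ⟨h1, h2⟩
    exact ⟨r, hr.le, φ, h1, h2, by rw [zero_add]⟩

lemma core_area {R a b : ℝ} (hR : 0 < R) (ha : -(π/2) ≤ a) (hab : a ≤ b) (hb : b ≤ π/2) :
    volume (Metric.closedBall (R : ℂ) R ∩ angularSector 0 a b)
      = ENNReal.ofReal (R ^ 2 *
          ((b + Real.sin b * Real.cos b) - (a + Real.sin a * Real.cos a))) := by
  have hπ := pi_pos
  set S := Metric.closedBall (R : ℂ) R ∩ angularSector 0 a b with hSdef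
  have hSm : MeasurableSet S := measurableSet_closedBall.inter (sector_measurable 0 a b)
  have hSfin : volume S ≠ ⊤ :=
    ((measure_mono Set.inter_subset_left).trans_lt measure_closedBall_lt_top).ne
  set T : Set (ℝ × ℝ) :=
    {p | (a ≤ p.2 ∧ p.2 ≤ b) ∧ 0 < p.1 ∧ p.1 ≤ 2 * R * Real.cos p.2} with hTdef
  have hTm : MeasurableSet T := by
    have h1 : MeasurableSet {p : ℝ × ℝ | a ≤ p.2} :=
      measurableSet_le measurable_const measurable_snd
    have h2 : MeasurableSet {p : ℝ × ℝ | p.2 ≤ b} :=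
      measurableSet_le measurable_snd measurable_const
    have h3 : MeasurableSet {p : ℝ × ℝ | 0 < p.1} :=
      measurableSet_lt measurable_const measurable_fst
    have h4 : MeasurableSet {p : ℝ × ℝ | p.1 ≤ 2 * R * Real.cos p.2} :=
      measurableSet_le measurable_fst ((Real.continuous_cos.measurable.comp
        measurable_snd).const_mul (2 * R))
    have : T = ({p : ℝ × ℝ | a ≤ p.2} ∩ {p | p.2 ≤ b}) ∩
        ({p | 0 < p.1} ∩ {p | p.1 ≤ 2 * R * Real.cos p.2}) := by
      ext p; simp [hTdef, and_assoc]
    rw [this]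
    exact ((h1.inter h2).inter (h3.inter h4))
  have hTsub : T ⊆ polarCoord.target := by
    rintro ⟨r, φ⟩ ⟨⟨h1, h2⟩, h3, _⟩
    refine ⟨h3, ?_, ?_⟩ <;> simp only [] <;> linarith
  have key : (volume S).toReal
      = R ^ 2 * ((b + Real.sin b * Real.cos b) - (a + Real.sin a * Real.cos a)) := by
    have h0 : (volume S).toReal = ∫ z, S.indicator (fun _ => (1 : ℝ)) z := by
      rw [integral_indicator hSm, setIntegral_const, smul_eq_mul, mul_one]; rfl
    rw [h0, ← Complex.integral_comp_polarCoord_symm]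
    have h1 : ∀ p ∈ polarCoord.target,
        p.1 • S.indicator (fun _ => (1 : ℝ)) (Complex.polarCoord.symm p)
          = T.indicator (fun q : ℝ × ℝ => q.1) p := by
      rintro ⟨r, φ⟩ hp
      rw [polarCoord_target] at hp
      obtain ⟨hr, hφ1, hφ2⟩ : 0 < r ∧ -π < φ ∧ φ < π := ⟨hp.1, hp.2.1, hp.2.2⟩
      have hsymm : Complex.polarCoord.symm (r, φ)
          = (r : ℂ) * Complex.exp ((φ : ℝ) * Complex.I) := by
        rw [Complex.polarCoord_symm_apply, Complex.exp_mul_I]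
        push_cast
        ring
      have hmem : Complex.polarCoord.symm (r, φ) ∈ S ↔ (r, φ) ∈ T := by
        rw [hsymm, hSdef, Set.mem_inter_iff,
          mem_ball_iff hR hr,
          mem_sector_iff hr (by linarith) (by linarith) hφ1 hφ2.le]
        constructor
        · rintro ⟨hb', hs⟩; exact ⟨hs, hr, hb'⟩
        · rintro ⟨hs, _, hb'⟩; exact ⟨hb', hs⟩
      by_cases h : (r, φ) ∈ T
      · rw [Set.indicator_of_mem (hmem.mpr h), Set.indicator_of_mem h, smul_eq_mul, mul_one]
      · rw [Set.indicator_of_notMem (fun hc => h (hmem.mp hc)), Set.indicator_of_notMem h,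
          smul_zero]
    rw [setIntegral_congr_fun polarCoord.open_target.measurableSet h1,
      setIntegral_indicator hTm, Set.inter_eq_self_of_subset_right hTsub]
    have hInt : Integrable (T.indicator (fun q : ℝ × ℝ => q.1)) (volume.prod volume) := by
      rw [← Measure.volume_eq_prod, integrable_indicator_iff hTm]
      have hsub : T ⊆ Set.Icc ((0 : ℝ), a) ((2 * R), b) := by
        rintro ⟨r, φ⟩ ⟨⟨h1', h2'⟩, h3', h4'⟩
        have hcos := Real.cos_le_one φ
        constructor
        · exact ⟨by simpa using h3'.le, by simpa using h1'⟩
        · exact ⟨by simp only []; nlinarith, by simpa using h2'⟩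
      exact (continuous_fst.continuousOn.integrableOn_compact isCompact_Icc).mono_set hsub
    rw [← integral_indicator hTm, Measure.volume_eq_prod, integral_prod_symm _ hInt]
    have h2 : ∀ φ : ℝ, (∫ r : ℝ, T.indicator (fun q : ℝ × ℝ => q.1) (r, φ))
        = (Set.Icc a b).indicator (fun ψ => 2 * R ^ 2 * Real.cos ψ ^ 2) φ := by
      intro φ
      by_cases hφ : φ ∈ Set.Icc a b
      · have hc : 0 ≤ Real.cos φ :=
          Real.cos_nonneg_of_mem_Icc ⟨by linarith [hφ.1], by linarith [hφ.2]⟩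
        have hc' : 0 ≤ 2 * R * Real.cos φ := by positivity
        have heq : ∀ r : ℝ, T.indicator (fun q : ℝ × ℝ => q.1) (r, φ)
            = (Set.Ioc 0 (2 * R * Real.cos φ)).indicator (fun r => r) r := by
          intro r
          by_cases hr : r ∈ Set.Ioc 0 (2 * R * Real.cos φ)
          · rw [Set.indicator_of_mem hr,
              Set.indicator_of_mem (show (r, φ) ∈ T from ⟨⟨hφ.1, hφ.2⟩, hr.1, hr.2⟩)]
          · rw [Set.indicator_of_notMem hr, Set.indicator_of_notMem]
            rintro ⟨_, h3', h4'⟩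
            exact hr ⟨h3', h4'⟩
        rw [Set.indicator_of_mem hφ]
        simp_rw [heq]
        rw [integral_indicator measurableSet_Ioc, ← intervalIntegral.integral_of_le hc',
          integral_id]
        ring
      · have heq : ∀ r : ℝ, T.indicator (fun q : ℝ × ℝ => q.1) (r, φ) = 0 := by
          intro r
          apply Set.indicator_of_notMem
          rintro ⟨h12, _⟩
          exact hφ ⟨h12.1, h12.2⟩
        rw [Set.indicator_of_notMem hφ]
        simp_rw [heq]
        simp
    rw [integral_congr_ae (Filter.Eventually.of_forall h2),
      integral_indicator measurableSet_Icc, integral_Icc_eq_integral_Ioc,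
      ← intervalIntegral.integral_of_le hab]
    rw [intervalIntegral.integral_const_mul, integral_cos_sq]
    ring
  rw [← ENNReal.ofReal_toReal hSfin, key]

lemma sector_shift (P : ℂ) (a b : ℝ) :
    angularSector P (a + 2 * π) (b + 2 * π) = angularSector P a b := by
  have hexp : ∀ φ : ℝ, Complex.exp (((φ + 2 * π : ℝ) : ℂ) * Complex.I)
      = Complex.exp ((φ : ℝ) * Complex.I) := by
    intro φ
    push_cast
    rw [add_mul, Complex.exp_add, Complex.exp_two_pi_mul_I, mul_one]
  have hexp2 : ∀ φ : ℝ, Complex.exp ((φ : ℂ) * Complex.I)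
      = Complex.exp (((φ - 2 * π : ℝ) : ℂ) * Complex.I) := by
    intro φ
    push_cast
    rw [sub_mul, Complex.exp_sub, Complex.exp_two_pi_mul_I, div_one]
  ext z
  constructor
  · rintro ⟨t, ht, φ, h1, h2, rfl⟩
    exact ⟨t, ht, φ - 2 * π, by linarith, by linarith, by rw [hexp2 φ]⟩
  · rintro ⟨t, ht, φ, h1, h2, rfl⟩
    exact ⟨t, ht, φ + 2 * π, by linarith, by linarith, by rw [hexp]⟩

lemma sector_union (P : ℂ) {a b c : ℝ} (hab : a ≤ b) (hbc : b ≤ c) :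
    angularSector P a c = angularSector P a b ∪ angularSector P b c := by
  ext z
  constructor
  · rintro ⟨t, ht, φ, h1, h2, rfl⟩
    rcases le_total φ b with h | h
    · exact Or.inl ⟨t, ht, φ, h1, h, rfl⟩
    · exact Or.inr ⟨t, ht, φ, h, h2, rfl⟩
  · rintro (⟨t, ht, φ, h1, h2, rfl⟩ | ⟨t, ht, φ, h1, h2, rfl⟩) <;>
      exact ⟨t, ht, φ, by linarith, by linarith, rfl⟩

lemma sector_disj {a₁ b₁ a₂ b₂ : ℝ} (h1 : b₁ < a₂) (h2 : b₂ - a₁ < 2 * π) :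
    angularSector 0 a₁ b₁ ∩ angularSector 0 a₂ b₂ ⊆ {0} := by
  rintro z ⟨⟨t, ht, φ, hφ1, hφ2, rfl⟩, ⟨t', ht', φ', hφ1', hφ2', heq⟩⟩
  simp only [zero_add] at heq ⊢
  rcases eq_or_lt_of_le ht with h | hpos
  · rw [← h]; simp
  exfalso
  have ht'pos : 0 < t' := by
    rcases eq_or_lt_of_le ht' with h' | h'
    · exfalso
      rw [← h'] at heq
      simp only [Complex.ofReal_zero, zero_mul] at heq
      have : (t : ℂ) ≠ 0 := by exact_mod_cast hpos.ne'
      exact (mul_ne_zero this (Complex.exp_ne_zero _)) heq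
    · exact h'
  have htt : t = t' := by
    have h := congrArg (fun w : ℂ => ‖w‖) heq
    simpa [Complex.norm_exp_ofReal_mul_I, abs_of_nonneg ht, abs_of_nonneg ht'] using h
  subst htt
  have hexp : Complex.exp ((φ : ℝ) * Complex.I) = Complex.exp ((φ' : ℝ) * Complex.I) :=
    mul_left_cancel₀ (by exact_mod_cast hpos.ne') heq
  obtain ⟨k, hk⟩ := Complex.exp_eq_exp_iff_exists_int.mp hexp
  have him : φ = φ' + k * (2 * π) := by
    have h := congrArg Complex.im hk
    simpa using h
  have hπ := pi_pos
  have hlt : φ < φ' := by linarith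
  have hk1 : (k : ℝ) < 0 := by nlinarith
  have hk2 : (-1 : ℝ) < (k : ℝ) := by nlinarith
  have hk1' : k < 0 := by exact_mod_cast hk1
  have hk2' : (-1 : ℤ) < k := by exact_mod_cast hk2
  omega

lemma vol_norm (O P : ℂ) (R ψ : ℝ) (hOP : O - P = (R : ℂ) * Complex.exp ((ψ : ℝ) * Complex.I))
    (a b : ℝ) :
    volume (Metric.closedBall O R ∩ angularSector P a b)
      = volume (Metric.closedBall (R : ℂ) R ∩ angularSector 0 (a - ψ) (b - ψ)) := by
  set u : Circle := Circle.exp (-ψ) with hu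
  have hucoe : (u : ℂ) = Complex.exp (((-ψ : ℝ) : ℂ) * Complex.I) := Circle.coe_exp (-ψ)
  have huexp : (u : ℂ) * Complex.exp ((ψ : ℝ) * Complex.I) = 1 := by
    rw [hucoe, ← Complex.exp_add]
    push_cast
    rw [show (-ψ : ℂ) * Complex.I + ψ * Complex.I = 0 by ring, Complex.exp_zero]
  set L : ℂ → ℂ := fun z => rotation u (z + -P) with hL
  have hLmp : MeasurePreserving L volume volume :=
    (rotation u).measurePreserving.comp (measurePreserving_add_right volume (-P))
  have hset : Metric.closedBall O R ∩ angularSector P a b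
      = L ⁻¹' (Metric.closedBall (R : ℂ) R ∩ angularSector 0 (a - ψ) (b - ψ)) := by
    ext z
    simp only [Set.mem_preimage, Set.mem_inter_iff, hL, rotation_apply]
    have hiff1 : (u : ℂ) * (z + -P) ∈ Metric.closedBall (R : ℂ) R ↔
        z ∈ Metric.closedBall O R := by
      rw [Metric.mem_closedBall, Metric.mem_closedBall, Complex.dist_eq, Complex.dist_eq]
      have : (u : ℂ) * (z + -P) - R = (u : ℂ) * (z - O) := by
        have : (R : ℂ) = (u : ℂ) * (O - P) := by rw [hOP, ← mul_assoc]; rw [mul_comm (u:ℂ) (R:ℂ), mul_assoc, huexp, mul_one]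
        rw [this]; ring
      rw [this, norm_mul]
      have : ‖(u : ℂ)‖ = 1 := by
        rw [hucoe]; exact Complex.norm_exp_ofReal_mul_I (-ψ)
      rw [this, one_mul]
    have hiff2 : (u : ℂ) * (z + -P) ∈ angularSector 0 (a - ψ) (b - ψ) ↔
        z ∈ angularSector P a b := by
      constructor
      · rintro ⟨t, ht, φ, h1, h2, hzeq⟩
        rw [zero_add] at hzeq
        refine ⟨t, ht, φ + ψ, by linarith, by linarith, ?_⟩
        have : z + -P = Complex.exp ((ψ : ℝ) * Complex.I) * ((u : ℂ) * (z + -P)) := by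
          rw [← mul_assoc, mul_comm (Complex.exp _) (u : ℂ), huexp, one_mul]
        rw [hzeq] at this
        have hz : z = P + Complex.exp ((ψ : ℝ) * Complex.I)
            * ((t : ℂ) * Complex.exp ((φ : ℝ) * Complex.I)) := by
          linear_combination this
        rw [hz, show ((φ + ψ : ℝ) : ℂ) = (φ : ℂ) + (ψ : ℂ) by push_cast; ring, add_mul,
          Complex.exp_add]
        ring
      · rintro ⟨t, ht, φ, h1, h2, rfl⟩
        refine ⟨t, ht, φ - ψ, by linarith, by linarith, ?_⟩
        rw [zero_add]
        have : P + (t : ℂ) * Complex.exp ((φ : ℝ) * Complex.I) + -P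
            = (t : ℂ) * Complex.exp ((φ : ℝ) * Complex.I) := by ring
        rw [this, hucoe, ← mul_assoc, mul_comm (Complex.exp _) ((t : ℂ)), mul_assoc,
          ← Complex.exp_add]
        push_cast
        ring_nf
    exact (and_congr hiff1 hiff2).symm
  rw [hset]
  exact hLmp.measure_preimage
    ((measurableSet_closedBall.inter (sector_measurable _ _ _)).nullMeasurableSet)

lemma mid_null {R : ℝ} (hR : 0 < R) :
    Metric.closedBall (R : ℂ) R ∩ angularSector 0 (π / 2) (3 * π / 2) ⊆ {0} := by
  rintro z ⟨hball, ⟨t, ht, φ, h1, h2, rfl⟩⟩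
  simp only [zero_add] at hball ⊢
  rcases eq_or_lt_of_le ht with h | hpos
  · rw [← h]; simp
  exfalso
  have hcos : Real.cos φ ≤ 0 :=
    Real.cos_nonpos_of_pi_div_two_le_of_le h1 (by linarith)
  have := (mem_ball_iff hR hpos).mp hball
  nlinarith

lemma cos_pos_of_chord {O P : ℂ} {R ψ ρ α : ℝ} (hR : 0 < R)
    (hOP : O - P = (R : ℂ) * Complex.exp ((ψ : ℝ) * Complex.I)) (hρ : 0 < ρ)
    (hd : dist O (P + (ρ : ℂ) * Complex.exp ((α : ℝ) * Complex.I)) = R) :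
    0 < Real.cos (α - ψ) := by
  have habs : ‖((R : ℂ) * Complex.exp ((ψ : ℝ) * Complex.I)
      - (ρ : ℂ) * Complex.exp ((α : ℝ) * Complex.I))‖ = R := by
    rw [← hOP]
    rw [Complex.dist_eq] at hd
    rw [← hd]
    congr 1
    ring
  have hsq := congrArg (fun x : ℝ => x ^ 2) habs
  simp only [Complex.sq_norm] at hsq
  rw [Complex.normSq_apply] at hsq
  have hre : ((R : ℂ) * Complex.exp ((ψ : ℝ) * Complex.I)
      - (ρ : ℂ) * Complex.exp ((α : ℝ) * Complex.I)).re
      = R * Real.cos ψ - ρ * Real.cos α := by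
    simp [Complex.mul_re, Complex.exp_ofReal_mul_I_re, Complex.exp_ofReal_mul_I_im]
  have him : ((R : ℂ) * Complex.exp ((ψ : ℝ) * Complex.I)
      - (ρ : ℂ) * Complex.exp ((α : ℝ) * Complex.I)).im
      = R * Real.sin ψ - ρ * Real.sin α := by
    simp [Complex.mul_im, Complex.exp_ofReal_mul_I_re, Complex.exp_ofReal_mul_I_im]
  rw [hre, him] at hsq
  rw [Real.cos_sub]
  nlinarith [Real.sin_sq_add_cos_sq ψ, Real.sin_sq_add_cos_sq α,
    mul_pos hρ hρ, mul_pos hR hρ]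

lemma branch_of_cos_pos {x : ℝ} (hx : 0 < Real.cos x) :
    ∃ m : ℤ, -(π / 2) < x - 2 * π * m ∧ x - 2 * π * m < π / 2 := by
  have hπ := pi_pos
  have h2π : 0 < 2 * π := by linarith
  set m := toIocDiv h2π (-π) x with hm
  set y := toIocMod h2π (-π) x with hy
  have hmem : y ∈ Set.Ioc (-π) (-π + 2 * π) := toIocMod_mem_Ioc h2π (-π) x
  have hyx : y = x - m * (2 * π) := by
    rw [hy, toIocMod, hm]
    simp [zsmul_eq_mul]
  have hcosy : Real.cos y = Real.cos x := by
    rw [hyx]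
    exact Real.cos_sub_int_mul_two_pi x m
  refine ⟨m, ?_, ?_⟩
  · by_contra h
    push_neg at h
    have h1 : x - 2 * π * m ≤ -(π / 2) := h
    have hy1 : y ≤ -(π / 2) := by rw [hyx]; linarith
    have hy2 : -π < y := hmem.1
    have : Real.cos y ≤ 0 := by
      have := Real.cos_nonpos_of_pi_div_two_le_of_le (x := -y) (by linarith) (by linarith)
      rwa [Real.cos_neg] at this
    rw [hcosy] at this
    linarith
  · by_contra h
    push_neg at h
    have hy1 : π / 2 ≤ y := by rw [hyx]; linarith
    have hy2 : y ≤ π := by have := hmem.2; linarith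
    have : Real.cos y ≤ 0 :=
      Real.cos_nonpos_of_pi_div_two_le_of_le hy1 (by linarith)
    rw [hcosy] at this
    linarith

lemma Gmono : Monotone (fun x : ℝ => x + Real.sin x * Real.cos x) := by
  have h : ∀ x : ℝ, HasDerivAt (fun x : ℝ => x + Real.sin x * Real.cos x)
      (1 + (Real.cos x * Real.cos x + Real.sin x * -Real.sin x)) x := fun x =>
    (hasDerivAt_id x).add ((Real.hasDerivAt_sin x).mul (Real.hasDerivAt_cos x))
  apply monotone_of_deriv_nonneg
  · exact fun x => ((h x).differentiableAt)
  · intro x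
    rw [(h x).deriv]
    nlinarith [Real.sin_sq_add_cos_sq x]

set_option maxHeartbeats 2000000 in
/-- with `P` on the boundary of the disk of radius `R` about `O` and the `n`
equiangular lines through `P` at directions `θ + k·π/n` (second intersections
`Ã k = P + ρ k · e^{i(θ+kπ/n)}`, `ρ k > 0`, `1 ≤ k ≤ n`), the area of the slice bounded by
`PÃ_{n/2}`, `PÃ_{n/2+1}` and the arc (the sector between lines `n/2` and `n/2+1`) plus the
area of the region bounded by `PÃ₁`, `PÃₙ` and the arc `Ã₁PÃₙ` containing `P` (the sector
from direction `θ + π` around to `θ + 2π + π/n`) equals `(2/n)·πR²`. -/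
theorem baumkuchen_stmt2
    (O P : ℂ) (R : ℝ) (hR : 0 < R) (hP : dist O P = R)
    (n : ℕ) (hn : 4 ≤ n) (hev : Even n) (θ : ℝ) (ρ : ℕ → ℝ)
    (hρ : ∀ k : ℕ, 1 ≤ k → k ≤ n → 0 < ρ k ∧
      dist O (P + (ρ k : ℂ) * Complex.exp ((↑(θ + (k : ℝ) * π / n)) * Complex.I)) = R) :
    volume (Metric.closedBall O R ∩
        angularSector P (θ + ((n / 2 : ℕ) : ℝ) * π / n) (θ + (((n / 2 : ℕ) : ℝ) + 1) * π / n)) +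
    volume (Metric.closedBall O R ∩
        angularSector P (θ + π) (θ + 2 * π + π / n)) =
    ENNReal.ofReal (2 / n * (π * R ^ 2)) := by
  have hπ := pi_pos
  have hn0 : (0 : ℝ) < n := by positivity
  have hn4 : (4 : ℝ) ≤ n := by exact_mod_cast hn
  have hπn : 0 < π / n := div_pos hπ hn0
  have hπn4 : π / n ≤ π / 4 := by gcongr
  -- the direction from P to O
  have habs : ‖O - P‖ = R := by rw [← Complex.dist_eq]; exact hP
  have hOP₀ : O - P = (R : ℂ) * Complex.exp ((Complex.arg (O - P) : ℝ) * Complex.I) := by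
    conv_lhs => rw [← Complex.norm_mul_exp_arg_mul_I (O - P)]
    rw [habs]
  set ψ₀ := Complex.arg (O - P) with hψ₀def
  -- extract the two cosine positivity facts
  obtain ⟨hρ1pos, hρ1d⟩ := hρ 1 le_rfl (by omega)
  obtain ⟨hρnpos, hρnd⟩ := hρ n (by omega) le_rfl
  have c1 : 0 < Real.cos (θ + ((1 : ℕ) : ℝ) * π / n - ψ₀) :=
    cos_pos_of_chord hR hOP₀ hρ1pos hρ1d
  have cn : 0 < Real.cos (θ + ((n : ℕ) : ℝ) * π / n - ψ₀) :=
    cos_pos_of_chord hR hOP₀ hρnpos hρnd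
  have e1 : θ + ((1 : ℕ) : ℝ) * π / n - ψ₀ = θ + π / n - ψ₀ := by push_cast; ring
  have en : θ + ((n : ℕ) : ℝ) * π / n - ψ₀ = θ + π - ψ₀ := by
    field_simp
  rw [e1] at c1
  rw [en] at cn
  obtain ⟨m₁, hb1a, hb1b⟩ := branch_of_cos_pos c1
  obtain ⟨m₂, hb2a, hb2b⟩ := branch_of_cos_pos cn
  have hm12 : m₂ = m₁ := by
    have hd1 : ((m₂ : ℝ) - m₁) < 1 := by nlinarith
    have hd2 : (-1 : ℝ) < ((m₂ : ℝ) - m₁) := by nlinarith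
    have hi1 : (m₂ : ℤ) - m₁ < 1 := by exact_mod_cast hd1
    have hi2 : (-1 : ℤ) < (m₂ : ℤ) - m₁ := by exact_mod_cast hd2
    omega
  rw [hm12] at hb2a hb2b
  set ψ : ℝ := ψ₀ + 2 * π * m₁ with hψdef
  have hOP : O - P = (R : ℂ) * Complex.exp ((ψ : ℝ) * Complex.I) := by
    rw [hOP₀, hψdef]
    congr 1
    push_cast
    rw [add_mul, Complex.exp_add,
      show ((2 : ℂ) * (π : ℂ) * (m₁ : ℂ)) * Complex.I = (m₁ : ℂ) * (2 * (π : ℂ) * Complex.I) by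
        ring,
      Complex.exp_int_mul_two_pi_mul_I, mul_one]
  set τ : ℝ := θ - ψ with hτdef
  have ht1a : -(π / 2) < τ + π / n := by rw [hτdef, hψdef]; linarith [hb1a]
  have ht1b : τ + π / n < π / 2 := by rw [hτdef, hψdef]; linarith [hb1b]
  have ht2a : -(π / 2) < τ + π := by rw [hτdef, hψdef]; linarith [hb2a]
  have ht2b : τ + π < π / 2 := by rw [hτdef, hψdef]; linarith [hb2b]
  have hlo : -(π / 2) - π / n < τ := by linarith
  have hhi : τ < -(π / 2) := by linarith
  -- simplify the angles of the first region
  obtain ⟨m', hm'⟩ := hev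
  have hm'2 : 2 ≤ m' := by omega
  have hn2 : n / 2 = m' := by omega
  have hncast : (n : ℝ) = 2 * (m' : ℝ) := by rw [hm']; push_cast; ring
  have hm'0 : ((m' : ℝ)) ≠ 0 := by positivity
  have ang1 : θ + ((n / 2 : ℕ) : ℝ) * π / n = θ + π / 2 := by
    rw [hn2, hncast]; field_simp
  have ang2 : θ + (((n / 2 : ℕ) : ℝ) + 1) * π / n = (θ + π / 2) + π / n := by
    rw [hn2, hncast]; field_simp; ring
  rw [ang1, ang2, vol_norm O P R ψ hOP (θ + π / 2) ((θ + π / 2) + π / n),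
    vol_norm O P R ψ hOP (θ + π) (θ + 2 * π + π / n)]
  have eA : θ + π / 2 - ψ = τ + π / 2 := by rw [hτdef]; ring
  have eB : (θ + π / 2) + π / n - ψ = τ + π / 2 + π / n := by rw [hτdef]; ring
  have eC : θ + π - ψ = τ + π := by rw [hτdef]; ring
  have eD : θ + 2 * π + π / n - ψ = τ + 2 * π + π / n := by rw [hτdef]; ring
  rw [eA, eB, eC, eD]
  -- split second region into three sectors
  have le_a : τ + π ≤ π / 2 := ht2b.le
  have le_b : π / 2 ≤ τ + 2 * π + π / n := by linarith
  have le_c : π / 2 ≤ 3 * π / 2 := by linarith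
  have le_d : 3 * π / 2 ≤ τ + 2 * π + π / n := by linarith
  have hsplit : angularSector 0 (τ + π) (τ + 2 * π + π / n)
      = angularSector 0 (τ + π) (π / 2) ∪ (angularSector 0 (π / 2) (3 * π / 2) ∪
          angularSector 0 (3 * π / 2) (τ + 2 * π + π / n)) := by
    rw [← sector_union 0 le_c le_d]
    exact sector_union 0 le_a le_b
  rw [hsplit, Set.inter_union_distrib_left, Set.inter_union_distrib_left]
  set B := Metric.closedBall (R : ℂ) R with hBdef
  set X := angularSector 0 (τ + π) (π / 2) with hXdef
  set Y := angularSector 0 (π / 2) (3 * π / 2) with hYdef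
  set Z := angularSector 0 (3 * π / 2) (τ + 2 * π + π / n) with hZdef
  have hvolY : volume (B ∩ Y) = 0 :=
    measure_mono_null (mid_null hR) (measure_singleton 0)
  have hvolXZ : volume ((B ∩ X) ∩ (B ∩ Z)) = 0 := by
    refine measure_mono_null ?_ (measure_singleton (0 : ℂ))
    refine Set.Subset.trans ?_ (sector_disj (a₁ := τ + π) (b₁ := π / 2) (a₂ := 3 * π / 2)
      (b₂ := τ + 2 * π + π / n) (by linarith) (by linarith))
    rintro z ⟨⟨_, hx⟩, ⟨_, hz⟩⟩
    exact ⟨hx, hz⟩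
  have hmX : MeasurableSet (B ∩ X) := measurableSet_closedBall.inter (sector_measurable _ _ _)
  have hmZ : MeasurableSet (B ∩ Z) := measurableSet_closedBall.inter (sector_measurable _ _ _)
  have hdecomp : volume (B ∩ X ∪ (B ∩ Y ∪ B ∩ Z)) = volume (B ∩ X) + volume (B ∩ Z) := by
    apply le_antisymm
    · calc volume (B ∩ X ∪ (B ∩ Y ∪ B ∩ Z))
          ≤ volume (B ∩ X) + volume (B ∩ Y ∪ B ∩ Z) := measure_union_le _ _
        _ ≤ volume (B ∩ X) + (volume (B ∩ Y) + volume (B ∩ Z)) := by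
            gcongr
            exact measure_union_le _ _
        _ = volume (B ∩ X) + volume (B ∩ Z) := by rw [hvolY, zero_add]
    · have h := measure_union_add_inter (μ := volume) (B ∩ X) hmZ
      rw [hvolXZ, add_zero] at h
      rw [← h]
      apply measure_mono
      rintro z (hz | hz)
      · exact Or.inl hz
      · exact Or.inr (Or.inr hz)
  rw [hdecomp]
  -- rewrite Z as a shifted sector
  have hZeq : Z = angularSector 0 (-(π / 2)) (τ + π / n) := by
    rw [hZdef, ← sector_shift 0 (-(π / 2)) (τ + π / n)]
    congr 1 <;> ring
  rw [hZeq]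
  -- apply the core area computation three times
  rw [core_area hR (by linarith) (by linarith) (by linarith),
    core_area hR (by linarith) le_a le_rfl,
    core_area hR le_rfl (by linarith) (by linarith)]
  -- combine the ofReal terms
  have hnn : ∀ x y : ℝ, x ≤ y →
      0 ≤ R ^ 2 * ((y + Real.sin y * Real.cos y) - (x + Real.sin x * Real.cos x)) := by
    intro x y hxy
    have := Gmono hxy
    simp only at this
    nlinarith [sq_nonneg R]
  rw [← ENNReal.ofReal_add (hnn _ _ le_a) (hnn _ _ (by linarith : -(π/2) ≤ τ + π / n)),
    ← ENNReal.ofReal_add (hnn _ _ (by linarith : τ + π / 2 ≤ τ + π / 2 + π / n))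
      (add_nonneg (hnn _ _ le_a) (hnn _ _ (by linarith : -(π/2) ≤ τ + π / n)))]
  congr 1
  have r1 : τ + π / 2 + π / n = (τ + π / n) + π / 2 := by ring
  rw [r1, Real.sin_add_pi_div_two, Real.cos_add_pi_div_two,
    Real.sin_add_pi_div_two, Real.cos_add_pi_div_two,
    show τ + π = τ + π from rfl, Real.sin_add_pi, Real.cos_add_pi,
    Real.sin_pi_div_two, Real.cos_pi_div_two,
    show -(π / 2) = -(π / 2) from rfl, Real.sin_neg, Real.cos_neg,
    Real.sin_pi_div_two, Real.cos_pi_div_two]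
  field_simp
  ring
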